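/- Let H and G be finite simple graphs with H ⊴ G and |G| − |H| > 2. Then the interval [H,G] is disconnected if and only if [H,G] is strongly zero-split. -/

import Mathlib

open SimpleGraph

/-- A finite simple graph, encoded by its number of vertices together with a
simple graph structure on `Fin n`. -/
def FinGraph : Type := Σ n : ℕ, SimpleGraph (Fin n)

namespace FinGraph

/-- The number of vertices of a graph. -/
def order (G : FinGraph) : ℕ := G.1

/-- Induced containment `H ⊴ G`: there is an injection of the vertices of `H`
into the vertices of `G` which preserves and reflects adjacency (equivalently,
`H` is isomorphic to an induced subgraph of `G`). -/
def Contains (H G : FinGraph) : Prop :=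
  ∃ f : Fin H.1 ↪ Fin G.1, ∀ a b : Fin H.1, G.2.Adj (f a) (f b) ↔ H.2.Adj a b

/-- Isomorphism of finite graphs. -/
def Iso (H G : FinGraph) : Prop := Nonempty (H.2 ≃g G.2)

/-- Package a simple graph on an arbitrary finite vertex type as a `FinGraph`. -/
noncomputable def of {V : Type} [Fintype V] (G : SimpleGraph V) : FinGraph :=
  ⟨Fintype.card V, G.comap ⇑(Fintype.equivFin V).symm⟩

end FinGraph

/-- `X` lies strictly between `H` and `G` in the induced containment order. -/
def StrictlyBetween (H G X : FinGraph) : Prop :=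
  H.Contains X ∧ X.Contains G ∧ ¬ X.Iso H ∧ ¬ X.Iso G

/-- The interval `[H,G]` is disconnected: the collection of graphs lying strictly
between `H` and `G` splits into two nonempty disjoint classes, each closed under
isomorphism and jointly exhaustive, such that no member of one class is
induced-contained in a member of the other. -/
def IntervalDisconnected (H G : FinGraph) : Prop :=
  ∃ A B : Set FinGraph,
    A.Nonempty ∧ B.Nonempty ∧ Disjoint A B ∧
    (∀ X : FinGraph, X ∈ A ∪ B ↔ StrictlyBetween H G X) ∧
    (∀ X ∈ A, ∀ Y : FinGraph, X.Iso Y → Y ∈ A) ∧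
    (∀ X ∈ B, ∀ Y : FinGraph, X.Iso Y → Y ∈ B) ∧
    (∀ X ∈ A, ∀ Y ∈ B, ¬ X.Contains Y ∧ ¬ Y.Contains X)

/-- `η` is an occurrence of `H` in `G`: the induced subgraph of `G` on `η` is
isomorphic to `H`. -/
def IsOccurrence (H G : FinGraph) (η : Finset (Fin G.1)) : Prop :=
  Nonempty (G.2.induce (↑η : Set (Fin G.1)) ≃g H.2)

/-- The interval `[H,G]` is strongly zero-split: the set of occurrences of `H` in
`G` can be partitioned into two nonempty disjoint sets `A` and `B` such that the
union of the complements `Z(η) = V(G) ∖ η` over `A` is disjoint from that over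
`B`, and there are no `η ∈ A`, `φ ∈ B` and vertices `i ∈ Z(η)`, `j ∈ Z(φ)` with
the induced subgraphs on `η ∪ {i}` and `φ ∪ {j}` isomorphic. -/
def StronglyZeroSplit (H G : FinGraph) : Prop :=
  ∃ A B : Set (Finset (Fin G.1)),
    A.Nonempty ∧ B.Nonempty ∧ Disjoint A B ∧
    (∀ η : Finset (Fin G.1), η ∈ A ∪ B ↔ IsOccurrence H G η) ∧
    ((⋃ η ∈ A, (↑η : Set (Fin G.1))ᶜ) ∩ (⋃ φ ∈ B, (↑φ : Set (Fin G.1))ᶜ) = ∅) ∧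
    ¬ ∃ η ∈ A, ∃ φ ∈ B, ∃ i ∉ η, ∃ j ∉ φ,
        Nonempty (G.2.induce (↑(insert i η) : Set (Fin G.1)) ≃g
                  G.2.induce (↑(insert j φ) : Set (Fin G.1)))

namespace Aux
open FinGraph
lemma contains_iff {H G : FinGraph} : H.Contains G ↔ Nonempty (H.2 ↪g G.2) := by
  constructor
  · rintro ⟨f, hf⟩; exact ⟨⟨f, fun {a b} => hf a b⟩⟩
  · rintro ⟨e⟩; exact ⟨e.toEmbedding, fun a b => e.map_rel_iff⟩
lemma iso_symm {H G : FinGraph} (h : H.Iso G) : G.Iso H := h.elim fun e => ⟨e.symm⟩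
lemma iso_trans {H G K : FinGraph} (h : H.Iso G) (h' : G.Iso K) : H.Iso K :=
  h.elim fun e => h'.elim fun e' => ⟨e.trans e'⟩
lemma contains_of_iso {H G : FinGraph} (h : H.Iso G) : H.Contains G :=
  h.elim fun e => contains_iff.2 ⟨e.toEmbedding⟩
lemma contains_trans {H G K : FinGraph} (h : H.Contains G) (h' : G.Contains K) :
    H.Contains K := by
  rcases contains_iff.1 h with ⟨e⟩; rcases contains_iff.1 h' with ⟨e'⟩
  exact contains_iff.2 ⟨e'.comp e⟩
lemma order_eq_of_iso {H G : FinGraph} (h : H.Iso G) : H.1 = G.1 := by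
  rcases h with ⟨e⟩; simpa using Fintype.card_congr e.toEquiv
lemma order_le_of_contains {H G : FinGraph} (h : H.Contains G) : H.1 ≤ G.1 := by
  rcases h with ⟨f, -⟩; simpa using Fintype.card_le_of_embedding f
lemma iso_of_contains_of_order_eq {H G : FinGraph} (h : H.Contains G) (hc : H.1 = G.1) :
    H.Iso G := by
  rcases h with ⟨f, hf⟩
  have hbij : Function.Bijective f :=
    (Fintype.bijective_iff_injective_and_card f).2 ⟨f.injective, by simp [hc]⟩
  exact ⟨⟨Equiv.ofBijective f hbij, fun {a b} => hf a b⟩⟩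
noncomputable def ofIso {V : Type} [Fintype V] (K : SimpleGraph V) :
    (FinGraph.of K).2 ≃g K :=
  SimpleGraph.Iso.comap (Fintype.equivFin V).symm K
lemma order_of {V : Type} [Fintype V] (K : SimpleGraph V) :
    (FinGraph.of K).1 = Fintype.card V := rfl
noncomputable def imageIso {V W : Type} {K : SimpleGraph V} {L : SimpleGraph W}
    (e : K ↪g L) (s : Set V) : K.induce s ≃g L.induce (⇑e '' s) where
  toEquiv := Equiv.Set.image ⇑e s e.injective
  map_rel_iff' := by
    rintro ⟨a, ha⟩ ⟨b, hb⟩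
    simp only [Equiv.Set.image_apply, comap_adj, Function.Embedding.coe_subtype]
    exact e.map_rel_iff
def isoOfSetEq {V : Type} {K : SimpleGraph V} {s t : Set V} (h : s = t) :
    K.induce s ≃g K.induce t := by subst h; exact RelIso.refl _
variable {H G : FinGraph}
noncomputable def finsetImageIso {k : ℕ} {K : SimpleGraph (Fin k)}
    (e : K ↪g G.2) (s : Finset (Fin k)) :
    G.2.induce (↑(s.image ⇑e) : Set (Fin G.1)) ≃g K.induce (↑s : Set (Fin k)) :=
  ((isoOfSetEq (by simp : (↑(s.image ⇑e) : Set (Fin G.1)) = ⇑e '' ↑s)).trans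
    (imageIso e (↑s : Set (Fin k))).symm)
lemma isOccurrence_card {η : Finset (Fin G.1)} (h : IsOccurrence H G η) :
    η.card = H.1 := by
  rcases h with ⟨e⟩; simpa using Fintype.card_congr e.toEquiv
lemma sb_induce (s : Finset (Fin G.1)) (hH : Nonempty (H.2 ↪g G.2.induce (↑s : Set (Fin G.1))))
    (h1 : H.1 < s.card) (h2 : s.card < G.1) :
    StrictlyBetween H G (FinGraph.of (G.2.induce (↑s : Set (Fin G.1)))) := by
  have hcard : (FinGraph.of (G.2.induce (↑s : Set (Fin G.1)))).1 = s.card := by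
    simp [order_of]
  refine ⟨?_, ?_, ?_, ?_⟩
  · exact contains_iff.2 ⟨((ofIso _).symm.toEmbedding).comp hH.some⟩
  · exact contains_iff.2 ⟨(SimpleGraph.Embedding.induce _).comp (ofIso _).toEmbedding⟩
  · intro h; have := order_eq_of_iso h; omega
  · intro h; have := order_eq_of_iso h; omega
lemma contains_of_subset {s t : Finset (Fin G.1)} (h : s ⊆ t) :
    (FinGraph.of (G.2.induce (↑s : Set (Fin G.1)))).Contains
      (FinGraph.of (G.2.induce (↑t : Set (Fin G.1)))) :=
  contains_iff.2 ⟨((ofIso _).symm.toEmbedding).comp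
    ((G.2.induceHomOfLE (by exact_mod_cast h)).comp (ofIso _).toEmbedding)⟩
lemma key {A B : Set (Finset (Fin G.1))}
    (hOcc : ∀ η : Finset (Fin G.1), η ∈ A ∪ B ↔ IsOccurrence H G η)
    (hZ : ((⋃ η ∈ A, (↑η : Set (Fin G.1))ᶜ) ∩ (⋃ φ ∈ B, (↑φ : Set (Fin G.1))ᶜ)) = ∅)
    (hext : ¬ ∃ η ∈ A, ∃ φ ∈ B, ∃ i ∉ η, ∃ j ∉ φ,
        Nonempty (G.2.induce (↑(insert i η) : Set (Fin G.1)) ≃g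
                  G.2.induce (↑(insert j φ) : Set (Fin G.1))))
    {k : ℕ} {X : SimpleGraph (Fin k)} (hk1 : H.1 < k) (hk2 : k < G.1)
    (e₁ e₂ : X ↪g G.2) {ψ ψ' : Finset (Fin G.1)} (hψA : ψ ∈ A) (hψ'B : ψ' ∈ B)
    (h₁ : ψ ⊆ Finset.image ⇑e₁ Finset.univ) (h₂ : ψ' ⊆ Finset.image ⇑e₂ Finset.univ) :
    False := by
  classical
  set ψ₀ : Finset (Fin k) := ψ.preimage ⇑e₁ (e₁.injective.injOn) with hψ₀
  have heq : ψ₀.image ⇑e₁ = ψ := by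
    ext x; simp only [Finset.mem_image, hψ₀, Finset.mem_preimage]
    constructor
    · rintro ⟨a, ha, rfl⟩; exact ha
    · intro hx
      rcases Finset.mem_image.1 (h₁ hx) with ⟨a, -, rfl⟩
      exact ⟨a, hx, rfl⟩
  set ψ₁ : Finset (Fin G.1) := ψ₀.image ⇑e₂ with hψ₁
  have occψ : IsOccurrence H G ψ := (hOcc ψ).1 (Or.inl hψA)
  have iso1 : G.2.induce (↑ψ : Set (Fin G.1)) ≃g X.induce (↑ψ₀ : Set (Fin k)) :=
    (isoOfSetEq (by rw [heq] : (↑ψ : Set (Fin G.1)) = ↑(ψ₀.image ⇑e₁))).trans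
      (finsetImageIso e₁ ψ₀)
  have iso2 : G.2.induce (↑ψ₁ : Set (Fin G.1)) ≃g X.induce (↑ψ₀ : Set (Fin k)) :=
    finsetImageIso e₂ ψ₀
  have occψ₁ : IsOccurrence H G ψ₁ := ⟨iso2.trans (iso1.symm.trans occψ.some)⟩
  have hc0 : ψ₀.card = H.1 := by
    have h1 : (ψ₀.image ⇑e₁).card = ψ₀.card := Finset.card_image_of_injective _ e₁.injective
    rw [heq] at h1
    rw [← h1]; exact isOccurrence_card occψ
  have hsub1 : ψ₁ ⊆ Finset.image ⇑e₂ Finset.univ := by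
    intro x hx; rcases Finset.mem_image.1 hx with ⟨a, -, rfl⟩
    exact Finset.mem_image_of_mem _ (Finset.mem_univ a)
  rcases (hOcc ψ₁).2 occψ₁ with hmem | hmem
  · have hcardim : (Finset.image ⇑e₂ Finset.univ).card = k := by
      rw [Finset.card_image_of_injective _ e₂.injective]; simp
    obtain ⟨v, hv⟩ : ∃ v, v ∉ Finset.image ⇑e₂ Finset.univ := by
      by_contra h'
      push_neg at h'
      rw [Finset.eq_univ_iff_forall.2 h'] at hcardim
      simp at hcardim; omega
    have hv1 : v ∈ ⋃ η ∈ A, (↑η : Set (Fin G.1))ᶜ := by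
      refine Set.mem_biUnion hmem ?_
      simp only [Set.mem_compl_iff, Finset.mem_coe]
      exact fun hvv => hv (hsub1 hvv)
    have hv2 : v ∈ ⋃ φ ∈ B, (↑φ : Set (Fin G.1))ᶜ := by
      refine Set.mem_biUnion hψ'B ?_
      simp only [Set.mem_compl_iff, Finset.mem_coe]
      exact fun hvv => hv (h₂ hvv)
    have : v ∈ (∅ : Set (Fin G.1)) := by rw [← hZ]; exact ⟨hv1, hv2⟩
    simp at this
  · obtain ⟨i₀, hi₀⟩ : ∃ i₀, i₀ ∉ ψ₀ := by
      by_contra h'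
      push_neg at h'
      have := Finset.card_le_card (fun x _ => h' x : (Finset.univ : Finset (Fin k)) ⊆ ψ₀)
      simp [hc0] at this; omega
    have hi : e₁ i₀ ∉ ψ := by
      rw [← heq]
      intro hmem'
      rcases Finset.mem_image.1 hmem' with ⟨a, ha, hae⟩
      exact hi₀ (e₁.injective hae ▸ ha)
    have hj : e₂ i₀ ∉ ψ₁ := by
      intro hmem'
      rcases Finset.mem_image.1 hmem' with ⟨a, ha, hae⟩
      exact hi₀ (e₂.injective hae ▸ ha)
    have hins1 : (insert i₀ ψ₀).image ⇑e₁ = insert (e₁ i₀) ψ := by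
      rw [Finset.image_insert, heq]
    have hins2 : (insert i₀ ψ₀).image ⇑e₂ = insert (e₂ i₀) ψ₁ := by
      rw [Finset.image_insert]
    have isoext : G.2.induce (↑(insert (e₁ i₀) ψ) : Set (Fin G.1)) ≃g
        G.2.induce (↑(insert (e₂ i₀) ψ₁) : Set (Fin G.1)) :=
      ((isoOfSetEq (by rw [hins1])).trans (finsetImageIso e₁ (insert i₀ ψ₀))).trans
        (((isoOfSetEq (by rw [hins2])).trans (finsetImageIso e₂ (insert i₀ ψ₀))).symm)
    exact hext ⟨ψ, hψA, ψ₁, hmem, e₁ i₀, hi, e₂ i₀, hj, ⟨isoext⟩⟩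
end Aux
namespace Aux
open FinGraph
variable {H G : FinGraph}

lemma sb_orders {X : FinGraph} (hX : StrictlyBetween H G X) : H.1 < X.1 ∧ X.1 < G.1 := by
  obtain ⟨h1, h2, h3, h4⟩ := hX
  constructor
  · rcases lt_or_eq_of_le (order_le_of_contains h1) with h | h
    · exact h
    · exact absurd (iso_symm (iso_of_contains_of_order_eq h1 h)) h3
  · rcases lt_or_eq_of_le (order_le_of_contains h2) with h | h
    · exact h
    · exact absurd (iso_of_contains_of_order_eq h2 h) h4

lemma occ_of_emb {X : FinGraph} (f : H.2 ↪g X.2) (e : X.2 ↪g G.2) :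
    IsOccurrence H G (Finset.image ⇑e (Finset.image ⇑f Finset.univ)) :=
  ⟨((finsetImageIso e (Finset.image ⇑f Finset.univ)).trans
    (finsetImageIso (G := X) f Finset.univ)).trans
    ((isoOfSetEq (by simp)).trans H.2.induceUnivIso)⟩

lemma dir1 (hrank : H.1 + 2 < G.1)
    (hzs : StronglyZeroSplit H G) : IntervalDisconnected H G := by
  classical
  obtain ⟨A, B, ⟨η₀, hη₀⟩, ⟨φ₀, hφ₀⟩, hdisj, hOcc, hZ, hext⟩ := hzs
  have mk : ∀ η : Finset (Fin G.1), IsOccurrence H G η →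
      ∃ X : FinGraph, StrictlyBetween H G X ∧
        ∃ e : X.2 ↪g G.2, η ⊆ Finset.image ⇑e Finset.univ := by
    intro η hocc
    have hcard : η.card = H.1 := isOccurrence_card hocc
    obtain ⟨i, hi⟩ : ∃ i, i ∉ η := by
      by_contra h'; push_neg at h'
      have := Finset.card_le_card (fun x _ => h' x : (Finset.univ : Finset (Fin G.1)) ⊆ η)
      simp [hcard] at this; omega
    have hscard : (insert i η).card = H.1 + 1 := by
      rw [Finset.card_insert_of_notMem hi, hcard]
    have hemb : Nonempty (H.2 ↪g G.2.induce (↑(insert i η) : Set (Fin G.1))) :=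
      ⟨(G.2.induceHomOfLE (by exact_mod_cast Finset.subset_insert i η)).comp
        hocc.some.symm.toEmbedding⟩
    refine ⟨FinGraph.of (G.2.induce (↑(insert i η) : Set (Fin G.1))),
      sb_induce _ hemb (by omega) (by omega),
      (SimpleGraph.Embedding.induce _).comp (ofIso _).toEmbedding, ?_⟩
    intro x hx
    have hxs : x ∈ (↑(insert i η) : Set (Fin G.1)) := by
      exact_mod_cast Finset.mem_insert_of_mem hx
    refine Finset.mem_image.2
      ⟨(ofIso (G.2.induce (↑(insert i η) : Set (Fin G.1)))).symm ⟨x, hxs⟩,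
        Finset.mem_univ _, ?_⟩
    simp
  obtain ⟨XA, hXA_sb, eA, hsubA⟩ := mk η₀ ((hOcc η₀).1 (Or.inl hη₀))
  obtain ⟨XB, hXB_sb, eB, hsubB⟩ := mk φ₀ ((hOcc φ₀).1 (Or.inr hφ₀))
  refine ⟨{X | StrictlyBetween H G X ∧
      ∃ e : X.2 ↪g G.2, ∃ ψ ∈ A, ψ ⊆ Finset.image ⇑e Finset.univ},
    {X | StrictlyBetween H G X ∧
      ∃ e : X.2 ↪g G.2, ∃ ψ ∈ B, ψ ⊆ Finset.image ⇑e Finset.univ},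
    ⟨XA, hXA_sb, eA, η₀, hη₀, hsubA⟩, ⟨XB, hXB_sb, eB, φ₀, hφ₀, hsubB⟩, ?_, ?_, ?_, ?_, ?_⟩
  · rw [Set.disjoint_left]
    rintro X ⟨hsb, e₁, ψ, hψ, h₁⟩ ⟨-, e₂, ψ', hψ', h₂⟩
    exact key hOcc hZ hext (sb_orders hsb).1 (sb_orders hsb).2 e₁ e₂ hψ hψ' h₁ h₂
  · intro X
    constructor
    · rintro (⟨hsb, -⟩ | ⟨hsb, -⟩) <;> exact hsb
    · intro hsb
      obtain ⟨f⟩ := contains_iff.1 hsb.1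
      obtain ⟨e⟩ := contains_iff.1 hsb.2.1
      have hocc := occ_of_emb f e
      have hsub : Finset.image ⇑e (Finset.image ⇑f Finset.univ) ⊆
          Finset.image ⇑e Finset.univ := Finset.image_subset_image (Finset.subset_univ _)
      rcases (hOcc _).2 hocc with h | h
      · exact Or.inl ⟨hsb, e, _, h, hsub⟩
      · exact Or.inr ⟨hsb, e, _, h, hsub⟩
  · rintro X ⟨hsb, e, ψ, hψ, hsubψ⟩ Y ⟨g⟩
    refine ⟨⟨contains_trans hsb.1 (contains_of_iso ⟨g⟩),
      contains_trans (contains_of_iso ⟨g.symm⟩) hsb.2.1,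
      fun h => hsb.2.2.1 (iso_trans ⟨g⟩ h), fun h => hsb.2.2.2 (iso_trans ⟨g⟩ h)⟩,
      e.comp g.symm.toEmbedding, ψ, hψ, ?_⟩
    intro x hx
    rcases Finset.mem_image.1 (hsubψ hx) with ⟨a, -, rfl⟩
    exact Finset.mem_image.2 ⟨g a, Finset.mem_univ _, by simp⟩
  · rintro X ⟨hsb, e, ψ, hψ, hsubψ⟩ Y ⟨g⟩
    refine ⟨⟨contains_trans hsb.1 (contains_of_iso ⟨g⟩),
      contains_trans (contains_of_iso ⟨g.symm⟩) hsb.2.1,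
      fun h => hsb.2.2.1 (iso_trans ⟨g⟩ h), fun h => hsb.2.2.2 (iso_trans ⟨g⟩ h)⟩,
      e.comp g.symm.toEmbedding, ψ, hψ, ?_⟩
    intro x hx
    rcases Finset.mem_image.1 (hsubψ hx) with ⟨a, -, rfl⟩
    exact Finset.mem_image.2 ⟨g a, Finset.mem_univ _, by simp⟩
  · rintro X ⟨hsbX, e₁, ψ, hψA, h₁⟩ Y ⟨hsbY, e₂, φ', hφ'B, h₂⟩
    constructor
    · intro hcon
      obtain ⟨f⟩ := contains_iff.1 hcon
      obtain ⟨hX⟩ := contains_iff.1 hsbX.1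
      have hocc := occ_of_emb hX (e₂.comp f)
      have hsub₃ : Finset.image ⇑(e₂.comp f) (Finset.image ⇑hX Finset.univ) ⊆
          Finset.image ⇑(e₂.comp f) Finset.univ :=
        Finset.image_subset_image (Finset.subset_univ _)
      have hsub₂ : Finset.image ⇑(e₂.comp f) (Finset.image ⇑hX Finset.univ) ⊆
          Finset.image ⇑e₂ Finset.univ := by
        intro x hx
        rcases Finset.mem_image.1 (hsub₃ hx) with ⟨a, -, rfl⟩
        exact Finset.mem_image.2 ⟨f a, Finset.mem_univ _, by simp⟩
      rcases (hOcc _).2 hocc with h | h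
      · exact key hOcc hZ hext (sb_orders hsbY).1 (sb_orders hsbY).2 e₂ e₂ h hφ'B hsub₂ h₂
      · exact key hOcc hZ hext (sb_orders hsbX).1 (sb_orders hsbX).2 e₁ (e₂.comp f) hψA h h₁ hsub₃
    · intro hcon
      obtain ⟨f⟩ := contains_iff.1 hcon
      obtain ⟨hY⟩ := contains_iff.1 hsbY.1
      have hocc := occ_of_emb hY (e₁.comp f)
      have hsub₃ : Finset.image ⇑(e₁.comp f) (Finset.image ⇑hY Finset.univ) ⊆
          Finset.image ⇑(e₁.comp f) Finset.univ :=
        Finset.image_subset_image (Finset.subset_univ _)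
      have hsub₁ : Finset.image ⇑(e₁.comp f) (Finset.image ⇑hY Finset.univ) ⊆
          Finset.image ⇑e₁ Finset.univ := by
        intro x hx
        rcases Finset.mem_image.1 (hsub₃ hx) with ⟨a, -, rfl⟩
        exact Finset.mem_image.2 ⟨f a, Finset.mem_univ _, by simp⟩
      rcases (hOcc _).2 hocc with h | h
      · exact key hOcc hZ hext (sb_orders hsbY).1 (sb_orders hsbY).2 (e₁.comp f) e₂ h hφ'B hsub₃ h₂
      · exact key hOcc hZ hext (sb_orders hsbX).1 (sb_orders hsbX).2 e₁ e₁ hψA h h₁ hsub₁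
end Aux
namespace Aux
open FinGraph
variable {H G : FinGraph}

lemma exists_not_mem' {m : ℕ} {s : Finset (Fin m)} (h : s.card < m) : ∃ i, i ∉ s := by
  by_contra h'; push_neg at h'
  have := Finset.card_le_card (fun x _ => h' x : (Finset.univ : Finset (Fin m)) ⊆ s)
  simp at this; omega

lemma subW_sb {W η : Finset (Fin G.1)} (hocc : IsOccurrence H G η) (hηW : η ⊆ W)
    (h1 : H.1 < W.card) (h2 : W.card < G.1) :
    StrictlyBetween H G (FinGraph.of (G.2.induce (↑W : Set (Fin G.1)))) :=
  sb_induce _ ⟨(G.2.induceHomOfLE (by exact_mod_cast hηW)).comp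
    hocc.some.symm.toEmbedding⟩ h1 h2

lemma ext_sb (hrank : H.1 + 2 < G.1) {η : Finset (Fin G.1)} (hocc : IsOccurrence H G η)
    {i : Fin G.1} (hi : i ∉ η) :
    StrictlyBetween H G (FinGraph.of (G.2.induce (↑(insert i η) : Set (Fin G.1)))) := by
  have hcard := isOccurrence_card hocc
  have hscard : (insert i η).card = H.1 + 1 := by
    rw [Finset.card_insert_of_notMem hi, hcard]
  exact subW_sb hocc (Finset.subset_insert i η) (by omega) (by omega)

lemma ext_class (hrank : H.1 + 2 < G.1) {C C' : Set FinGraph}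
    (hsb_mem : ∀ X : FinGraph, StrictlyBetween H G X → X ∈ C ∪ C')
    (hcrossC : ∀ X ∈ C, ∀ Y ∈ C', ¬ X.Contains Y ∧ ¬ Y.Contains X)
    {η : Finset (Fin G.1)} (hocc : IsOccurrence H G η)
    {i j : Fin G.1} (hi : i ∉ η) (hj : j ∉ η)
    (hA : FinGraph.of (G.2.induce (↑(insert i η) : Set (Fin G.1))) ∈ C) :
    FinGraph.of (G.2.induce (↑(insert j η) : Set (Fin G.1))) ∈ C := by
  by_cases hij : j = i
  · subst hij; exact hA
  have hcard := isOccurrence_card hocc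
  have hjmem : j ∉ insert i η := by simp [Finset.mem_insert, hij, hj]
  have hbigcard : (insert j (insert i η)).card = H.1 + 2 := by
    rw [Finset.card_insert_of_notMem hjmem, Finset.card_insert_of_notMem hi, hcard]
  have hYsb : StrictlyBetween H G
      (FinGraph.of (G.2.induce (↑(insert j (insert i η)) : Set (Fin G.1)))) :=
    subW_sb hocc ((Finset.subset_insert i η).trans (Finset.subset_insert j _))
      (by omega) (by omega)
  have hc1 : (FinGraph.of (G.2.induce (↑(insert i η) : Set (Fin G.1)))).Contains
      (FinGraph.of (G.2.induce (↑(insert j (insert i η)) : Set (Fin G.1)))) :=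
    contains_of_subset (Finset.subset_insert j _)
  have hc2 : (FinGraph.of (G.2.induce (↑(insert j η) : Set (Fin G.1)))).Contains
      (FinGraph.of (G.2.induce (↑(insert j (insert i η)) : Set (Fin G.1)))) :=
    contains_of_subset (Finset.insert_subset_insert j (Finset.subset_insert i η))
  rcases hsb_mem _ hYsb with hY | hY
  · rcases hsb_mem _ (ext_sb hrank hocc hj) with h | h
    · exact h
    · exact absurd hc2 (hcrossC _ hY _ h).2
  · exact absurd hc1 (hcrossC _ hA _ hY).1

lemma exists_occ_class (hrank : H.1 + 2 < G.1) {C C' : Set FinGraph}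
    (hsb_mem : ∀ X : FinGraph, StrictlyBetween H G X → X ∈ C ∪ C')
    (hcrossC : ∀ X ∈ C, ∀ Y ∈ C', ¬ X.Contains Y ∧ ¬ Y.Contains X)
    {X : FinGraph} (hXC : X ∈ C) (hXsb : StrictlyBetween H G X) :
    ∃ η : Finset (Fin G.1), IsOccurrence H G η ∧ ∃ i ∉ η,
      FinGraph.of (G.2.induce (↑(insert i η) : Set (Fin G.1))) ∈ C := by
  classical
  obtain ⟨f⟩ := contains_iff.1 hXsb.1
  obtain ⟨e⟩ := contains_iff.1 hXsb.2.1
  set ψ₀ : Finset (Fin X.1) := Finset.image ⇑f Finset.univ with hψ₀def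
  set ψ : Finset (Fin G.1) := Finset.image ⇑e ψ₀ with hψdef
  have hocc : IsOccurrence H G ψ := occ_of_emb f e
  have hψ₀card : ψ₀.card = H.1 := by
    rw [hψ₀def, Finset.card_image_of_injective _ f.injective]; simp
  obtain ⟨i₀, hi₀⟩ : ∃ i₀ : Fin X.1, i₀ ∉ ψ₀ :=
    exists_not_mem' (by rw [hψ₀card]; exact (sb_orders hXsb).1)
  have hi : e i₀ ∉ ψ := by
    intro hmem'
    rcases Finset.mem_image.1 hmem' with ⟨a, ha, hae⟩
    exact hi₀ (e.injective hae ▸ ha)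
  have hins : (insert i₀ ψ₀).image ⇑e = insert (e i₀) ψ := by
    rw [Finset.image_insert]
  have hZX : (FinGraph.of (G.2.induce (↑(insert (e i₀) ψ) : Set (Fin G.1)))).Contains X :=
    contains_iff.2 ⟨(SimpleGraph.Embedding.induce (↑(insert i₀ ψ₀) : Set (Fin X.1))).comp
      ((ofIso _).trans ((isoOfSetEq (by rw [hins])).trans
        (finsetImageIso e (insert i₀ ψ₀)))).toRelEmbedding⟩
  have hZsb := ext_sb hrank hocc hi
  rcases hsb_mem _ hZsb with h | h
  · exact ⟨ψ, hocc, e i₀, hi, h⟩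
  · exact absurd hZX (hcrossC _ hXC _ h).2

lemma dir2 (hrank : H.1 + 2 < G.1) (hid : IntervalDisconnected H G) :
    StronglyZeroSplit H G := by
  classical
  obtain ⟨A, B, ⟨X₀, hX₀⟩, ⟨Y₀, hY₀⟩, hdisj, hUnion, hclA, hclB, hcross⟩ := hid
  have hsb_memAB : ∀ X : FinGraph, StrictlyBetween H G X → X ∈ A ∪ B :=
    fun X h => (hUnion X).2 h
  have hcross' : ∀ X ∈ B, ∀ Y ∈ A, ¬ X.Contains Y ∧ ¬ Y.Contains X :=
    fun X hX Y hY => ⟨(hcross Y hY X hX).2, (hcross Y hY X hX).1⟩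
  have hsb_memBA : ∀ X : FinGraph, StrictlyBetween H G X → X ∈ B ∪ A := by
    intro X h
    rcases hsb_memAB X h with h' | h'
    · exact Set.mem_union_right _ h'
    · exact Set.mem_union_left _ h'
  obtain ⟨ηA, hoccA, iA, hiA, hmemA⟩ :=
    exists_occ_class hrank hsb_memAB hcross hX₀ ((hUnion X₀).1 (Set.mem_union_left _ hX₀))
  obtain ⟨ηB, hoccB, iB, hiB, hmemB⟩ :=
    exists_occ_class hrank hsb_memBA hcross' hY₀ ((hUnion Y₀).1 (Set.mem_union_right _ hY₀))
  refine ⟨{η | IsOccurrence H G η ∧ ∃ i ∉ η,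
      FinGraph.of (G.2.induce (↑(insert i η) : Set (Fin G.1))) ∈ A},
    {η | IsOccurrence H G η ∧ ∃ i ∉ η,
      FinGraph.of (G.2.induce (↑(insert i η) : Set (Fin G.1))) ∈ B},
    ⟨ηA, hoccA, iA, hiA, hmemA⟩, ⟨ηB, hoccB, iB, hiB, hmemB⟩, ?_, ?_, ?_, ?_⟩
  · rw [Set.disjoint_left]
    rintro η ⟨hocc, i, hi, hA⟩ ⟨-, i', hi', hB⟩
    have : FinGraph.of (G.2.induce (↑(insert i η) : Set (Fin G.1))) ∈ B :=
      ext_class hrank hsb_memBA hcross' hocc hi' hi hB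
    exact Set.disjoint_left.1 hdisj hA this
  · intro η
    constructor
    · rintro (⟨h, -⟩ | ⟨h, -⟩) <;> exact h
    · intro hocc
      obtain ⟨i, hi⟩ := exists_not_mem'
        (show η.card < G.1 by rw [isOccurrence_card hocc]; omega)
      rcases hsb_memAB _ (ext_sb hrank hocc hi) with h | h
      · exact Or.inl ⟨hocc, i, hi, h⟩
      · exact Or.inr ⟨hocc, i, hi, h⟩
  · rw [Set.eq_empty_iff_forall_notMem]
    rintro v ⟨hv1, hv2⟩
    rw [Set.mem_iUnion₂] at hv1 hv2
    obtain ⟨η, hηA', hvη⟩ := hv1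
    obtain ⟨φ, hφB', hvφ⟩ := hv2
    have hvη' : v ∉ η := by simpa using hvη
    have hvφ' : v ∉ φ := by simpa using hvφ
    obtain ⟨hoccη, iη, hiη, hmemη⟩ := hηA'
    obtain ⟨hoccφ, iφ, hiφ, hmemφ⟩ := hφB'
    set W : Finset (Fin G.1) := Finset.univ.erase v with hWdef
    have hWcard : W.card = G.1 - 1 := by
      rw [hWdef, Finset.card_erase_of_mem (Finset.mem_univ v)]; simp
    have hηW : η ⊆ W := fun x hx =>
      Finset.mem_erase.2 ⟨fun h => hvη' (h ▸ hx), Finset.mem_univ _⟩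
    have hφW : φ ⊆ W := fun x hx =>
      Finset.mem_erase.2 ⟨fun h => hvφ' (h ▸ hx), Finset.mem_univ _⟩
    have hηcard := isOccurrence_card hoccη
    have hφcard := isOccurrence_card hoccφ
    have hWsb := subW_sb hoccη hηW (by omega) (by omega)
    obtain ⟨j, hjW, hjη⟩ : ∃ j ∈ W, j ∉ η := by
      by_contra h'; push_neg at h'
      have := Finset.card_le_card (fun x hx => h' x hx : W ⊆ η)
      omega
    obtain ⟨j', hj'W, hj'φ⟩ : ∃ j' ∈ W, j' ∉ φ := by
      by_contra h'; push_neg at h'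
      have := Finset.card_le_card (fun x hx => h' x hx : W ⊆ φ)
      omega
    have hjA : FinGraph.of (G.2.induce (↑(insert j η) : Set (Fin G.1))) ∈ A :=
      ext_class hrank hsb_memAB hcross hoccη hiη hjη hmemη
    have hj'B : FinGraph.of (G.2.induce (↑(insert j' φ) : Set (Fin G.1))) ∈ B :=
      ext_class hrank hsb_memBA hcross' hoccφ hiφ hj'φ hmemφ
    have hconη : (FinGraph.of (G.2.induce (↑(insert j η) : Set (Fin G.1)))).Contains
        (FinGraph.of (G.2.induce (↑W : Set (Fin G.1)))) :=
      contains_of_subset (Finset.insert_subset hjW hηW)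
    have hconφ : (FinGraph.of (G.2.induce (↑(insert j' φ) : Set (Fin G.1)))).Contains
        (FinGraph.of (G.2.induce (↑W : Set (Fin G.1)))) :=
      contains_of_subset (Finset.insert_subset hj'W hφW)
    rcases hsb_memAB _ hWsb with h | h
    · exact absurd hconφ (hcross _ h _ hj'B).2
    · exact absurd hconη (hcross _ hjA _ h).1
  · rintro ⟨η, hηA', φ, hφB', i, hi, j, hj, ⟨g⟩⟩
    obtain ⟨hoccη, i₁, hi₁, hmemη⟩ := hηA'
    obtain ⟨hoccφ, j₁, hj₁, hmemφ⟩ := hφB'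
    have hA : FinGraph.of (G.2.induce (↑(insert i η) : Set (Fin G.1))) ∈ A :=
      ext_class hrank hsb_memAB hcross hoccη hi₁ hi hmemη
    have hB : FinGraph.of (G.2.induce (↑(insert j φ) : Set (Fin G.1))) ∈ B :=
      ext_class hrank hsb_memBA hcross' hoccφ hj₁ hj hmemφ
    have hiso : (FinGraph.of (G.2.induce (↑(insert i η) : Set (Fin G.1)))).Iso
        (FinGraph.of (G.2.induce (↑(insert j φ) : Set (Fin G.1)))) :=
      ⟨((ofIso _).trans g).trans (ofIso _).symm⟩
    exact Set.disjoint_left.1 hdisj (hclA _ hA _ hiso) hB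
end Aux

/-- An interval `[H,G]` with `|G| - |H| > 2` is disconnected if and only if it is
strongly zero-split. -/
theorem interval_disconnected_iff_stronglyZeroSplit (H G : FinGraph)
    (hHG : H.Contains G) (hrank : H.order + 2 < G.order) :
    IntervalDisconnected H G ↔ StronglyZeroSplit H G := by
  exact ⟨Aux.dir2 hrank, Aux.dir1 hrank⟩
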